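/- Let λ > 0 and a, b ∈ ℝ, and define G(s) = −8·s·(a − b·log s)/( λ²·(1 + s²/λ²)² ) for s > 0. Then for every r > 0, −(1/2)·( (1/r)·∫₀^r s²·G(s) ds + r·∫ᵣ^∞ G(s) ds ) = (2a·λ²/r)·log(1 + r²/λ²) − (b·λ²/r)·( Li₂(−r²/λ²) + 2·log r·( log(1 + r²/λ²) − r²/(λ² + r²) ) + log(1 + r²/λ²) ) − r·b·( 2·λ²·log r/(λ² + r²) + log(1 + λ²/r²) ). -/

import Mathlib

open Real MeasureTheory

open Set Filter Topology in
/-- The integrand of `Li2` is bounded by 1 on nonpositive arguments. -/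
private lemma li2_bound_aux {y : ℝ} (hy : y ≤ 0) : ‖-Real.log (1 - y) / y‖ ≤ 1 := by
  rcases eq_or_lt_of_le hy with rfl | hy'
  · simp
  · have h1 : Real.log (1 - y) ≤ -y := by
      have := Real.log_le_sub_one_of_pos (x := 1 - y) (by linarith)
      linarith
    have h2 : 0 ≤ Real.log (1 - y) := Real.log_nonneg (by linarith)
    have h4 : -Real.log (1 - y) / y = Real.log (1 - y) / (-y) := by
      rw [neg_div, div_neg]
    have h3 : 0 ≤ -Real.log (1 - y) / y := by
      rw [h4]; exact div_nonneg h2 (by linarith)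
    rw [Real.norm_eq_abs, abs_of_nonneg h3, h4]
    exact (div_le_one (by linarith)).2 h1

private lemma li2_meas : Measurable (fun y : ℝ => -Real.log (1 - y) / y) :=
  ((Real.measurable_log.comp (measurable_const.sub measurable_id)).neg).div measurable_id

/-- The dilogarithm Li₂(x) = ∫₀^x (−log(1−y)/y) dy, defined for x ≤ 1. -/
noncomputable def Li2 (x : ℝ) : ℝ := ∫ y in (0:ℝ)..x, -Real.log (1 - y) / y

section Aux
open Set Filter Topology intervalIntegral

private lemma li2_intervalIntegrable {x : ℝ} (hx : x ≤ 0) :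
    IntervalIntegrable (fun y : ℝ => -Real.log (1 - y) / y) volume 0 x := by
  rw [intervalIntegrable_iff, Set.uIoc_of_ge hx]
  apply Measure.integrableOn_of_bounded (M := 1)
  · exact (measure_Ioc_lt_top).ne
  · exact li2_meas.aestronglyMeasurable
  · exact (ae_restrict_iff' measurableSet_Ioc).2
      (Eventually.of_forall fun y hy => li2_bound_aux hy.2)

private lemma li2_hasDerivAt {x : ℝ} (hx : x < 0) :
    HasDerivAt Li2 (-Real.log (1 - x) / x) x := by
  apply intervalIntegral.integral_hasDerivAt_right (li2_intervalIntegrable hx.le)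
    (li2_meas.stronglyMeasurable.stronglyMeasurableAtFilter)
  have h1 : ContinuousAt (fun y : ℝ => (1:ℝ) - y) x := by fun_prop
  exact ((Real.continuousAt_log (show (1:ℝ) - x ≠ 0 by linarith)).comp h1).neg.div
    continuousAt_id hx.ne

private lemma li2_abs_le {x : ℝ} (hx : x ≤ 0) : |Li2 x| ≤ |x| := by
  have := intervalIntegral.norm_integral_le_of_norm_le_const (C := 1)
    (f := fun y : ℝ => -Real.log (1 - y) / y) (a := 0) (b := x) ?_
  · simpa [Li2] using this
  · intro y hy
    rw [Set.uIoc_of_ge hx] at hy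
    exact li2_bound_aux hy.2

private lemma li2_comp_hasDerivAt (lam : ℝ) (hlam : 0 < lam) {s : ℝ} (hs : 0 < s) :
    HasDerivAt (fun t : ℝ => Li2 (-(t^2/lam^2))) (-(2/s)*Real.log (1+s^2/lam^2)) s := by
  have hinner : HasDerivAt (fun t : ℝ => -(t^2/lam^2)) (-(2*s/lam^2)) s := by
    have := ((hasDerivAt_pow 2 s).div_const (lam^2)).neg
    simp at this
    exact this
  have hx : -(s^2/lam^2) < 0 := neg_lt_zero.mpr (by positivity)
  have := (li2_hasDerivAt hx).comp s hinner
  refine this.congr_deriv ?_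
  rw [show (1:ℝ) - -(s^2/lam^2) = 1 + s^2/lam^2 by ring]
  have h1 : s ≠ 0 := hs.ne'
  have h2 : lam ≠ 0 := hlam.ne'
  field_simp

/-- Antiderivative of `s ↦ s² G(s)`. -/
private noncomputable def Fant (lam a b s : ℝ) : ℝ :=
  -8*lam^2*(a*(Real.log (lam^2+s^2)/2 + lam^2/(2*(lam^2+s^2)))
    - b*(Real.log s * (Real.log (lam^2+s^2) - 2*Real.log lam + lam^2/(lam^2+s^2) - 1)/2
        + Li2 (-(s^2/lam^2))/4 + Real.log (lam^2+s^2)/4))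

/-- Antiderivative of `G`. -/
private noncomputable def Gant (lam a b s : ℝ) : ℝ :=
  -8*lam^2*(-a/(2*(lam^2+s^2))
    - b*(-Real.log s/(2*(lam^2+s^2)) + Real.log (s^2/(lam^2+s^2))/(4*lam^2)))

private lemma log_one_add_sq (lam : ℝ) (hlam : 0 < lam) {s : ℝ} (hs : 0 < s) :
    Real.log (1+s^2/lam^2) = Real.log (lam^2+s^2) - 2*Real.log lam := by
  rw [show (1+s^2/lam^2) = (lam^2+s^2)/lam^2 by field_simp,
    Real.log_div (by positivity) (by positivity),
    show Real.log (lam^2) = 2*Real.log lam by rw [Real.log_pow]; push_cast; ring]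

private lemma Fant_hasDerivAt (lam a b : ℝ) (hlam : 0 < lam) {s : ℝ} (hs : 0 < s) :
    HasDerivAt (Fant lam a b)
      (s^2 * (-8*s*(a - b*Real.log s) / (lam^2 * (1 + s^2/lam^2)^2))) s := by
  have hDpos : 0 < lam^2 + s^2 := by positivity
  have hD : HasDerivAt (fun t : ℝ => lam^2 + t^2) (2*s) s := by
    have := (hasDerivAt_pow 2 s).const_add (lam^2)
    simpa using this
  have hlogD : HasDerivAt (fun t : ℝ => Real.log (lam^2+t^2)) (2*s/(lam^2+s^2)) s :=
    hD.log hDpos.ne'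
  have h2D : HasDerivAt (fun t : ℝ => 2*(lam^2+t^2)) (2*(2*s)) s := hD.const_mul 2
  have hA := (hlogD.div_const 2).add
    ((hasDerivAt_const s (lam^2)).div h2D (by positivity))
  have hfrac := (hasDerivAt_const s (lam^2)).div hD hDpos.ne'
  have hB1 := ((hlogD.sub_const (2*Real.log lam)).add hfrac).sub_const 1
  have hB := ((Real.hasDerivAt_log hs.ne').mul hB1).div_const 2
  have hC := (li2_comp_hasDerivAt lam hlam hs).div_const 4
  have hD4 := hlogD.div_const 4
  have hF := ((hA.const_mul a).sub (((hB.add hC).add hD4).const_mul b)).const_mul (-8*lam^2)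
  refine hF.congr_deriv ?_
  rw [log_one_add_sq lam hlam hs]
  have h1 : s ≠ 0 := hs.ne'
  have h2 : lam ≠ 0 := hlam.ne'
  have h3 : lam^2 + s^2 ≠ 0 := hDpos.ne'
  simp only [Pi.add_apply, Pi.sub_apply, Pi.div_apply, Pi.neg_apply, Pi.mul_apply]
  field_simp
  ring

private lemma Gant_hasDerivAt (lam a b : ℝ) (hlam : 0 < lam) {s : ℝ} (hs : 0 < s) :
    HasDerivAt (Gant lam a b)
      (-8*s*(a - b*Real.log s) / (lam^2 * (1 + s^2/lam^2)^2)) s := by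
  have hDpos : 0 < lam^2 + s^2 := by positivity
  have hD : HasDerivAt (fun t : ℝ => lam^2 + t^2) (2*s) s := by
    have := (hasDerivAt_pow 2 s).const_add (lam^2)
    simpa using this
  have h2D : HasDerivAt (fun t : ℝ => 2*(lam^2+t^2)) (2*(2*s)) s := hD.const_mul 2
  have h1 := (hasDerivAt_const s (-a)).div h2D (by positivity)
  have h2 := ((Real.hasDerivAt_log hs.ne').neg).div h2D (by positivity)
  have hq := (hasDerivAt_pow 2 s).div hD hDpos.ne'
  have h3 := (hq.log (by simp only [Pi.div_apply]; positivity)).div_const (4*lam^2)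
  have hG := (h1.sub ((h2.add h3).const_mul b)).const_mul (-8*lam^2)
  refine hG.congr_deriv ?_
  have h1' : s ≠ 0 := hs.ne'
  have h2' : lam ≠ 0 := hlam.ne'
  have h3' : lam^2 + s^2 ≠ 0 := hDpos.ne'
  simp only [Pi.add_apply, Pi.sub_apply, Pi.div_apply, Pi.neg_apply, Pi.mul_apply]
  field_simp
  ring

private lemma T_tendsto (lam : ℝ) (hlam : 0 < lam) :
    Tendsto (fun s : ℝ => Real.log s *
      (Real.log (lam^2+s^2) - 2*Real.log lam + lam^2/(lam^2+s^2) - 1))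
      (𝓝[>] 0) (𝓝 0) := by
  apply squeeze_zero_norm' (a := fun s => s/lam^2)
  · filter_upwards [Ioo_mem_nhdsGT_of_mem (Set.left_mem_Ico.2 zero_lt_one)] with s hs
    obtain ⟨hs0, hs1⟩ := hs
    have hD : (0:ℝ) < lam^2 + s^2 := by positivity
    have hu : 0 < s^2/lam^2 := by positivity
    set u := s^2/lam^2 with hudef
    have key : Real.log (lam^2+s^2) - 2*Real.log lam + lam^2/(lam^2+s^2) - 1
        = Real.log (1+u) - u/(1+u) := by
      rw [← log_one_add_sq lam hlam hs0]
      have h9 : lam^2/(lam^2+s^2) - 1 = -(u/(1+u)) := by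
        rw [hudef]; field_simp
        try ring
      linarith
    rw [key]
    have hB1 : Real.log (1+u) ≤ u := by
      have := Real.log_le_sub_one_of_pos (show (0:ℝ) < 1+u by positivity)
      linarith
    have hB2 : u/(1+u) ≤ Real.log (1+u) := by
      have h := Real.log_le_sub_one_of_pos (show (0:ℝ) < (1+u)⁻¹ by positivity)
      rw [Real.log_inv] at h
      have h2 : (1+u)⁻¹ - 1 = -(u/(1+u)) := by field_simp; ring
      rw [h2] at h
      linarith
    have hB3 : 0 ≤ u/(1+u) := by positivity
    have hlogs : |Real.log s| ≤ s⁻¹ := by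
      have hneg : Real.log s ≤ 0 := Real.log_nonpos hs0.le hs1.le
      rw [abs_of_nonpos hneg, ← Real.log_inv]
      have := Real.log_le_sub_one_of_pos (show (0:ℝ) < s⁻¹ by positivity)
      linarith
    have hBabs : |Real.log (1+u) - u/(1+u)| ≤ u := by
      rw [abs_le]; constructor <;> nlinarith
    calc ‖Real.log s * (Real.log (1+u) - u/(1+u))‖
        = |Real.log s| * |Real.log (1+u) - u/(1+u)| := by
          rw [norm_mul, Real.norm_eq_abs, Real.norm_eq_abs]
      _ ≤ s⁻¹ * u := by
          apply mul_le_mul hlogs hBabs (abs_nonneg _) (by positivity)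
      _ = s/lam^2 := by rw [hudef]; field_simp
  · have : Tendsto (fun s : ℝ => s/lam^2) (𝓝 0) (𝓝 (0/lam^2)) :=
      (continuous_id.tendsto 0).div_const _
    simpa using this.mono_left nhdsWithin_le_nhds

private lemma Fant_tendsto (lam a b : ℝ) (hlam : 0 < lam) :
    Tendsto (Fant lam a b) (𝓝[>] 0)
      (𝓝 (-8*lam^2*(a*(Real.log (lam^2)/2 + 1/2) - b*(Real.log (lam^2)/4)))) := by
  have hD : (0:ℝ) < lam^2 := by positivity
  have hlog : Tendsto (fun s : ℝ => Real.log (lam^2+s^2)) (𝓝[>] 0) (𝓝 (Real.log (lam^2))) := by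
    have : ContinuousAt (fun s : ℝ => Real.log (lam^2+s^2)) 0 := by
      apply ContinuousAt.log (by fun_prop)
      simp [hD.ne']
    simpa using this.tendsto.mono_left nhdsWithin_le_nhds
  have hfrac : Tendsto (fun s : ℝ => lam^2/(2*(lam^2+s^2))) (𝓝[>] 0) (𝓝 (1/2)) := by
    have : ContinuousAt (fun s : ℝ => lam^2/(2*(lam^2+s^2))) 0 := by
      apply ContinuousAt.div (by fun_prop) (by fun_prop)
      simp [hD.ne']
    have h := this.tendsto.mono_left (nhdsWithin_le_nhds (s := Set.Ioi (0:ℝ)))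
    have h2 : lam^2/(2*(lam^2+(0:ℝ)^2)) = 1/2 := by
      rw [show lam^2+(0:ℝ)^2 = lam^2 by ring]
      rw [div_eq_div_iff (by positivity) (by norm_num)]
      ring
    rw [show (1:ℝ)/2 = lam^2/(2*(lam^2+(0:ℝ)^2)) from h2.symm]
    simpa using h
  have hli2 : Tendsto (fun s : ℝ => Li2 (-(s^2/lam^2))) (𝓝[>] 0) (𝓝 0) := by
    apply squeeze_zero_norm (a := fun s => s^2/lam^2)
    · intro s
      rw [Real.norm_eq_abs]
      calc |Li2 (-(s^2/lam^2))| ≤ |(-(s^2/lam^2))| := li2_abs_le (neg_nonpos.2 (by positivity))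
        _ = s^2/lam^2 := by rw [abs_neg, abs_of_nonneg (by positivity)]
    · have : Tendsto (fun s : ℝ => s^2/lam^2) (𝓝 0) (𝓝 ((0:ℝ)^2/lam^2)) :=
        ((continuous_pow 2).tendsto 0).div_const _
      simpa using this.mono_left nhdsWithin_le_nhds
  have hT := T_tendsto lam hlam
  have := ((((hlog.div_const 2).add hfrac).const_mul a).sub
    ((((hT.div_const 2).add (hli2.div_const 4)).add (hlog.div_const 4)).const_mul b)).const_mul
    (-8*lam^2)
  convert this using 2
  rfl
  ring

private lemma Gant_tendsto (lam a b : ℝ) (hlam : 0 < lam) :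
    Tendsto (Gant lam a b) atTop (𝓝 0) := by
  have hdenom : Tendsto (fun s : ℝ => 2*(lam^2+s^2)) atTop atTop := by
    apply Tendsto.const_mul_atTop two_pos
    exact tendsto_atTop_add_const_left _ _ (tendsto_pow_atTop two_ne_zero)
  have h1 : Tendsto (fun s : ℝ => -a/(2*(lam^2+s^2))) atTop (𝓝 0) :=
    tendsto_const_nhds.div_atTop hdenom
  have h2 : Tendsto (fun s : ℝ => -Real.log s/(2*(lam^2+s^2))) atTop (𝓝 0) := by
    apply squeeze_zero_norm' (a := fun s : ℝ => 1/(2*s))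
    · filter_upwards [eventually_ge_atTop (1:ℝ)] with s hs1
      have hs0 : (0:ℝ) < s := lt_of_lt_of_le one_pos hs1
      have hlog0 : 0 ≤ Real.log s := Real.log_nonneg hs1
      have hlogs : Real.log s ≤ s := (Real.log_le_sub_one_of_pos hs0).trans (by linarith)
      have hd : (0:ℝ) < 2*(lam^2+s^2) := by positivity
      rw [Real.norm_eq_abs, abs_div, abs_neg, abs_of_nonneg hlog0, abs_of_pos hd]
      rw [div_le_div_iff₀ hd (by positivity)]
      nlinarith [sq_nonneg lam, sq_nonneg (s-1)]
    · exact tendsto_const_nhds.div_atTop ((tendsto_id.const_mul_atTop two_pos))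
  have h3 : Tendsto (fun s : ℝ => Real.log (s^2/(lam^2+s^2))/(4*lam^2)) atTop (𝓝 0) := by
    have hin : Tendsto (fun s : ℝ => s^2/(lam^2+s^2)) atTop (𝓝 1) := by
      have he : ∀ᶠ s : ℝ in atTop, 1 - lam^2/(lam^2+s^2) = s^2/(lam^2+s^2) := by
        filter_upwards [eventually_gt_atTop (0:ℝ)] with s hs
        have : lam^2+s^2 ≠ 0 := by positivity
        field_simp
        ring
      have h0 : Tendsto (fun s : ℝ => 1 - lam^2/(lam^2+s^2)) atTop (𝓝 (1 - 0)) := by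
        apply Tendsto.const_sub
        exact tendsto_const_nhds.div_atTop
          (tendsto_atTop_add_const_left _ _ (tendsto_pow_atTop two_ne_zero))
      rw [show (1:ℝ) - 0 = 1 by ring] at h0
      exact h0.congr' he
    have hl : Tendsto (fun s : ℝ => Real.log (s^2/(lam^2+s^2))) atTop (𝓝 0) := by
      have := (Real.continuousAt_log one_ne_zero).tendsto.comp hin
      simpa [Function.comp_def] using this
    simpa using hl.div_const (4*lam^2)
  have h := ((h1.sub ((h2.add h3).const_mul b)).const_mul (-8*lam^2))
  have heq : Gant lam a b = fun s => -8*lam^2 * (-a/(2*(lam^2+s^2))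
      - b*(-Real.log s/(2*(lam^2+s^2)) + Real.log (s^2/(lam^2+s^2))/(4*lam^2))) := rfl
  rw [heq]
  simpa using h

private lemma G_meas (lam a b : ℝ) :
    Measurable (fun s : ℝ => -8*s*(a - b*Real.log s) / (lam^2 * (1 + s^2/lam^2)^2)) := by
  apply Measurable.div
  · exact ((measurable_const.mul measurable_id).mul
      (measurable_const.sub (measurable_const.mul Real.measurable_log)))
  · fun_prop

private lemma f1_intervalIntegrable (lam a b : ℝ) (hlam : 0 < lam) {r : ℝ} (hr : 0 < r) :
    IntervalIntegrable (fun s : ℝ =>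
      s^2 * (-8*s*(a - b*Real.log s) / (lam^2 * (1 + s^2/lam^2)^2))) volume 0 r := by
  rw [intervalIntegrable_iff, Set.uIoc_of_le hr.le]
  refine Measure.integrableOn_of_bounded
    (M := 8*(r^3*|a| + r^2*(1+r^2)*|b|)/lam^2) ?_ ?_ ?_
  · exact measure_Ioc_lt_top.ne
  · exact ((measurable_id.pow_const 2).mul (G_meas lam a b)).aestronglyMeasurable
  · rw [ae_restrict_iff' measurableSet_Ioc]
    filter_upwards with s hs
    obtain ⟨hs0, hsr⟩ := hs
    have hslog : s*|Real.log s| ≤ 1+r^2 := by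
      rcases le_or_gt s 1 with h | h
      · have h1 : |Real.log s| = -Real.log s := abs_of_nonpos (Real.log_nonpos hs0.le h)
        have h2 : -Real.log s ≤ s⁻¹ := by
          rw [← Real.log_inv]
          have := Real.log_le_sub_one_of_pos (show (0:ℝ) < s⁻¹ by positivity)
          linarith
        have h3 : s * |Real.log s| ≤ s * s⁻¹ := by
          rw [h1]
          exact mul_le_mul_of_nonneg_left h2 hs0.le
        rw [mul_inv_cancel₀ hs0.ne'] at h3
        nlinarith
      · have h1 : |Real.log s| = Real.log s := abs_of_nonneg (Real.log_nonneg h.le)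
        have h2 : Real.log s ≤ s := by
          have := Real.log_le_sub_one_of_pos hs0
          linarith
        nlinarith
    have habs : |a - b*Real.log s| ≤ |a| + |b| * |Real.log s| := by
      calc |a - b*Real.log s| ≤ |a| + |b*Real.log s| := abs_sub _ _
        _ = |a| + |b| * |Real.log s| := by rw [abs_mul]
    have hu : (0:ℝ) ≤ s^2/lam^2 := by positivity
    have hd1 : (1:ℝ) ≤ (1+s^2/lam^2)^2 := by nlinarith
    have hdpos : (0:ℝ) < lam^2 * (1+s^2/lam^2)^2 := by positivity
    calc ‖s^2 * (-8*s*(a - b*Real.log s) / (lam^2 * (1 + s^2/lam^2)^2))‖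
        = 8*s^3*|a - b*Real.log s| / (lam^2 * (1+s^2/lam^2)^2) := by
          rw [Real.norm_eq_abs, abs_mul, abs_div, abs_of_pos hdpos,
            show -8*s*(a - b*Real.log s) = (-8*s)*(a - b*Real.log s) by ring, abs_mul,
            abs_of_nonpos (by nlinarith : -8*s ≤ 0), abs_of_nonneg (sq_nonneg s)]
          ring
      _ ≤ 8*s^3*(|a| + |b| * |Real.log s|) / (lam^2 * 1) := by
          gcongr
      _ = (8*(s^3*|a| + s^2*(s*|Real.log s|)*|b|))/lam^2 := by ring
      _ ≤ 8*(r^3*|a| + r^2*(1+r^2)*|b|)/lam^2 := by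
          have hs3 : s^3 ≤ r^3 := pow_le_pow_left₀ hs0.le hsr 3
          have hs2 : s^2 ≤ r^2 := pow_le_pow_left₀ hs0.le hsr 2
          have h1 : s^3*|a| ≤ r^3*|a| := mul_le_mul_of_nonneg_right hs3 (abs_nonneg a)
          have h2 : s^2*(s*|Real.log s|)*|b| ≤ r^2*(1+r^2)*|b| := by
            apply mul_le_mul_of_nonneg_right _ (abs_nonneg b)
            apply mul_le_mul hs2 hslog (by positivity) (by positivity)
          gcongr 8*?_/lam^2
          linarith

private lemma log_linear_bound {r s : ℝ} (hr : 0 < r) (hrs : r ≤ s) :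
    |Real.log s| ≤ |Real.log r| + s := by
  have hs0 : 0 < s := lt_of_lt_of_le hr hrs
  rcases le_or_gt 1 s with h | h
  · have h1 : |Real.log s| = Real.log s := abs_of_nonneg (Real.log_nonneg h)
    have h2 : Real.log s ≤ s := by
      have := Real.log_le_sub_one_of_pos hs0
      linarith
    have := abs_nonneg (Real.log r)
    linarith
  · have hr1 : r < 1 := lt_of_le_of_lt hrs h
    have h1 : |Real.log s| = -Real.log s := abs_of_nonpos (Real.log_nonpos hs0.le h.le)
    have h2 : |Real.log r| = -Real.log r := abs_of_nonpos (Real.log_nonpos hr.le hr1.le)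
    have h3 : Real.log r ≤ Real.log s := Real.log_le_log hr hrs
    linarith

private lemma G_integrableOn_Ioi (lam a b : ℝ) (hlam : 0 < lam) {r : ℝ} (hr : 0 < r) :
    IntegrableOn (fun s : ℝ => -8*s*(a - b*Real.log s) / (lam^2 * (1 + s^2/lam^2)^2))
      (Set.Ioi r) := by
  set C1 := 8*lam^2*(|a| + |b| * |Real.log r|) with hC1
  set C2 := 8*lam^2*|b| with hC2
  have hmaj : IntegrableOn (fun s : ℝ => C1 * s^(-3:ℝ) + C2 * s^(-2:ℝ)) (Set.Ioi r) :=
    ((integrableOn_Ioi_rpow_of_lt (by norm_num) hr).const_mul C1).add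
      ((integrableOn_Ioi_rpow_of_lt (by norm_num) hr).const_mul C2)
  refine Integrable.mono hmaj ((G_meas lam a b).aestronglyMeasurable) ?_
  rw [ae_restrict_iff' measurableSet_Ioi]
  filter_upwards with s hs
  have hs0 : 0 < s := lt_trans hr hs
  have hrs : r ≤ s := (le_of_lt hs)
  have hid : lam^2 * (1 + s^2/lam^2)^2 = (lam^2+s^2)^2/lam^2 := by
    field_simp
  have habs : |a - b*Real.log s| ≤ |a| + |b| * |Real.log s| := by
    calc |a - b*Real.log s| ≤ |a| + |b*Real.log s| := abs_sub _ _
      _ = |a| + |b| * |Real.log s| := by rw [abs_mul]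
  have e3 : s^(-3:ℝ) = (s^3)⁻¹ := by
    rw [← Real.rpow_natCast s 3, ← Real.rpow_neg hs0.le]
    norm_num
  have e2 : s^(-2:ℝ) = (s^2)⁻¹ := by
    rw [← Real.rpow_natCast s 2, ← Real.rpow_neg hs0.le]
    norm_num
  have hrhs_nonneg : 0 ≤ C1 * s^(-3:ℝ) + C2 * s^(-2:ℝ) := by
    rw [e3, e2, hC1, hC2]
    positivity
  rw [Real.norm_eq_abs (C1 * s^(-3:ℝ) + C2 * s^(-2:ℝ)), abs_of_nonneg hrhs_nonneg]
  calc ‖-8*s*(a - b*Real.log s) / (lam^2 * (1 + s^2/lam^2)^2)‖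
      = 8*s*|a - b*Real.log s| * lam^2 / (lam^2+s^2)^2 := by
        rw [Real.norm_eq_abs, hid, div_div_eq_mul_div, abs_div, abs_mul,
          show -8*s*(a - b*Real.log s) = (-8*s)*(a - b*Real.log s) by ring, abs_mul,
          abs_of_nonpos (by nlinarith : -8*s ≤ 0), abs_of_pos (show (0:ℝ) < lam^2 by positivity),
          abs_of_pos (show (0:ℝ) < (lam^2+s^2)^2 by positivity)]
        ring
    _ ≤ 8*s*(|a| + |b| * (|Real.log r| + s)) * lam^2 / (s^2)^2 := by
        have hle : |Real.log s| ≤ |Real.log r| + s := log_linear_bound hr hrs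
        have hsq : s^2 ≤ lam^2 + s^2 := by nlinarith [sq_nonneg lam]
        gcongr
        exact habs.trans (by nlinarith [mul_le_mul_of_nonneg_left hle (abs_nonneg b)])
    _ = C1 * s^(-3:ℝ) + C2 * s^(-2:ℝ) := by
        rw [e3, e2, hC1, hC2]
        field_simp
        ring

end Aux

open Set Filter Topology in
/-- Explicit evaluation of the Green's-function solution of u'' + u'/r − u/r² = G
for G(s) = −8s(a − b log s)/(λ²(1 + s²/λ²)²). -/
theorem stmt18 (lam a b : ℝ) (hlam : 0 < lam) (r : ℝ) (hr : 0 < r) :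
    -(1/2) * ((1/r) * (∫ s in (0:ℝ)..r,
          s^2 * (-8*s*(a - b*Real.log s) / (lam^2 * (1 + s^2/lam^2)^2)))
        + r * (∫ s in Set.Ioi r,
          -8*s*(a - b*Real.log s) / (lam^2 * (1 + s^2/lam^2)^2)))
      = (2*a*lam^2/r) * Real.log (1 + r^2/lam^2)
        - (b*lam^2/r) * (Li2 (-(r^2/lam^2))
            + 2*Real.log r * (Real.log (1 + r^2/lam^2) - r^2/(lam^2 + r^2))
            + Real.log (1 + r^2/lam^2))
        - r*b * (2*lam^2*Real.log r/(lam^2 + r^2) + Real.log (1 + lam^2/r^2)) := by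
  have hI1 : (∫ s in (0:ℝ)..r,
      s^2 * (-8*s*(a - b*Real.log s) / (lam^2 * (1 + s^2/lam^2)^2)))
      = Fant lam a b r
        - (-8*lam^2*(a*(Real.log (lam^2)/2 + 1/2) - b*(Real.log (lam^2)/4))) := by
    apply intervalIntegral.integral_eq_sub_of_hasDerivAt_of_tendsto hr
      (fun x hx => Fant_hasDerivAt lam a b hlam hx.1)
      (f1_intervalIntegrable lam a b hlam hr)
      (Fant_tendsto lam a b hlam)
    exact ((Fant_hasDerivAt lam a b hlam hr).continuousAt.tendsto).mono_left
      nhdsWithin_le_nhds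
  have hI2 : (∫ s in Set.Ioi r,
      -8*s*(a - b*Real.log s) / (lam^2 * (1 + s^2/lam^2)^2))
      = 0 - Gant lam a b r := by
    apply MeasureTheory.integral_Ioi_of_hasDerivAt_of_tendsto'
      (fun x hx => Gant_hasDerivAt lam a b hlam (lt_of_lt_of_le hr hx))
      (G_integrableOn_Ioi lam a b hlam hr)
      (Gant_tendsto lam a b hlam)
  rw [hI1, hI2]
  have hD : (0:ℝ) < lam^2 + r^2 := by positivity
  have e1 : Real.log (1 + r^2/lam^2) = Real.log (lam^2+r^2) - 2*Real.log lam :=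
    log_one_add_sq lam hlam hr
  have e2 : Real.log (1 + lam^2/r^2) = Real.log (lam^2+r^2) - 2*Real.log r := by
    rw [show (1+lam^2/r^2) = (lam^2+r^2)/r^2 by field_simp; ring,
      Real.log_div hD.ne' (by positivity),
      show Real.log (r^2) = 2*Real.log r by rw [Real.log_pow]; push_cast; ring]
  have e3 : Real.log (r^2/(lam^2+r^2)) = 2*Real.log r - Real.log (lam^2+r^2) := by
    rw [Real.log_div (by positivity) hD.ne',
      show Real.log (r^2) = 2*Real.log r by rw [Real.log_pow]; push_cast; ring]
  have e4 : Real.log (lam^2) = 2*Real.log lam := by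
    rw [Real.log_pow]; push_cast; ring
  rw [Fant, Gant, e1, e2, e3, e4]
  have h1 : r ≠ 0 := hr.ne'
  have h2 : lam ≠ 0 := hlam.ne'
  have h3 : lam^2 + r^2 ≠ 0 := hD.ne'
  field_simp
  ring
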